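/- Let b be uniformly distributed on {-1, 1} and n a standard Gaussian independent of b. Then the MMSE of estimating b from √γ·b + n satisfies mmse_b(γ) = (1/√(2π)) ∫_{-∞}^{∞} (1 - tanh(√γ·y)) e^{-(y-√γ)²/2} dy, and this is at least 2Q(√γ) for all γ ≥ 0. -/

import Mathlib

open MeasureTheory ProbabilityTheory Real

open scoped ENNReal NNReal

/-- The standard Gaussian tail function `Q(t) = ∫_t^∞ (1/√(2π)) e^{-u²/2} du`. -/
noncomputable def gaussQ (t : ℝ) : ℝ :=
  ∫ u in Set.Ioi t, (1 / Real.sqrt (2 * π)) * Real.exp (-u ^ 2 / 2)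

/-- The minimum mean-square error of estimating `Z` from `√γ·Z + N`:
`mmse_Z(γ) = E[(Z − E[Z | √γ·Z + N])²]`. -/
noncomputable def mmse {Ω : Type*} [MeasureSpace Ω] (Z N : Ω → ℝ) (γ : ℝ) : ℝ :=
  ∫ ω, (Z ω - (volume[Z | MeasurableSpace.comap
      (fun ω' => Real.sqrt γ * Z ω' + N ω') Real.measurableSpace]) ω) ^ 2

/-! ### Real-analytic auxiliary lemmas -/

noncomputable def gpdf (x : ℝ) : ℝ := (Real.sqrt (2 * π))⁻¹ * Real.exp (-x ^ 2 / 2)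

lemma gpdf_nonneg (x : ℝ) : 0 ≤ gpdf x := by unfold gpdf; positivity

lemma gpdf_even (x : ℝ) : gpdf (-x) = gpdf x := by simp [gpdf]

lemma gaussianPDFReal_eq_gpdf : gaussianPDFReal 0 1 = gpdf := by
  funext x
  simp [gaussianPDFReal, gpdf]

lemma integrable_gpdf : Integrable gpdf := by
  rw [← gaussianPDFReal_eq_gpdf]; exact integrable_gaussianPDFReal 0 1

lemma measurable_gpdf : Measurable gpdf := by
  rw [← gaussianPDFReal_eq_gpdf]; exact measurable_gaussianPDFReal 0 1

lemma tanh_exp (t : ℝ) :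
    Real.tanh t = (Real.exp t - Real.exp (-t)) / (Real.exp t + Real.exp (-t)) := by
  rw [Real.tanh_eq_sinh_div_cosh, Real.sinh_eq, Real.cosh_eq]
  have h : Real.exp t + Real.exp (-t) ≠ 0 := by positivity
  field_simp

lemma exp_sum_pos (t : ℝ) : 0 < Real.exp t + Real.exp (-t) := by positivity

lemma tanh_le_one' (t : ℝ) : Real.tanh t ≤ 1 := by
  rw [tanh_exp, div_le_one (exp_sum_pos t)]
  nlinarith [Real.exp_pos (-t)]

lemma neg_one_le_tanh' (t : ℝ) : -1 ≤ Real.tanh t := by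
  rw [tanh_exp, le_div_iff₀ (exp_sum_pos t)]
  nlinarith [Real.exp_pos t]

lemma abs_tanh_le_one (t : ℝ) : |Real.tanh t| ≤ 1 :=
  abs_le.2 ⟨neg_one_le_tanh' t, tanh_le_one' t⟩

lemma tanh_nonneg' {t : ℝ} (ht : 0 ≤ t) : 0 ≤ Real.tanh t := by
  rw [tanh_exp]
  exact div_nonneg (by nlinarith [Real.exp_le_exp.2 (show -t ≤ t by linarith)])
    (exp_sum_pos t).le

lemma tanh_nonpos' {t : ℝ} (ht : t ≤ 0) : Real.tanh t ≤ 0 := by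
  rw [tanh_exp]
  exact div_nonpos_of_nonpos_of_nonneg
    (by nlinarith [Real.exp_le_exp.2 (show t ≤ -t by linarith)]) (exp_sum_pos t).le

lemma measurable_tanh : Measurable Real.tanh := by
  have : Real.tanh = fun x => Real.sinh x / Real.cosh x := funext Real.tanh_eq_sinh_div_cosh
  rw [this]
  exact (Real.continuous_sinh.div Real.continuous_cosh
    (fun x => (Real.cosh_pos x).ne')).measurable

/-- Key pointwise identity A. -/
lemma key1 (a y : ℝ) :
    (1 - Real.tanh (a * y)) * gpdf (y - a) = (1 + Real.tanh (a * y)) * gpdf (y + a) := by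
  unfold gpdf
  rw [show -(y - a) ^ 2 / 2 = -(y ^ 2 + a ^ 2) / 2 + a * y by ring,
    show -(y + a) ^ 2 / 2 = -(y ^ 2 + a ^ 2) / 2 + -(a * y) by ring,
    Real.exp_add, Real.exp_add, tanh_exp]
  have h := (exp_sum_pos (a * y)).ne'
  field_simp
  ring

/-- Key pointwise identity B. -/
lemma key2 (a y : ℝ) :
    gpdf (y - a) - gpdf (y + a)
      = Real.tanh (a * y) * (gpdf (y - a) + gpdf (y + a)) := by
  unfold gpdf
  rw [show -(y - a) ^ 2 / 2 = -(y ^ 2 + a ^ 2) / 2 + a * y by ring,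
    show -(y + a) ^ 2 / 2 = -(y ^ 2 + a ^ 2) / 2 + -(a * y) by ring,
    Real.exp_add, Real.exp_add, tanh_exp]
  have h := (exp_sum_pos (a * y)).ne'
  field_simp

/-- Integrability of bounded measurable functions times shifted Gaussian. -/
lemma integrable_mul_gpdf {g : ℝ → ℝ} {C : ℝ} (hg : Measurable g)
    (hC : ∀ y, |g y| ≤ C) (c : ℝ) :
    Integrable (fun y => g y * gpdf (y - c)) := by
  refine ((integrable_gpdf.comp_sub_right c).const_mul C).mono'
    (hg.mul (measurable_gpdf.comp (measurable_id.sub measurable_const))).aestronglyMeasurable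
    (ae_of_all _ fun y => ?_)
  rw [Real.norm_eq_abs, abs_mul]
  calc |g y| * |gpdf (y - c)| ≤ C * |gpdf (y - c)| := by
        apply mul_le_mul_of_nonneg_right (hC y) (abs_nonneg _)
    _ = C * gpdf (y - c) := by rw [abs_of_nonneg (gpdf_nonneg _)]

lemma integrable_mul_gpdf' {g : ℝ → ℝ} {C : ℝ} (hg : Measurable g)
    (hC : ∀ y, |g y| ≤ C) (c : ℝ) :
    Integrable (fun y => g y * gpdf (y + c)) := by
  have := integrable_mul_gpdf hg hC (-c)
  simpa [sub_neg_eq_add] using this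

/-- Translation: `∫ u, h (c + u) * gpdf u = ∫ y, h y * gpdf (y - c)`. -/
lemma integral_shift (h : ℝ → ℝ) (c : ℝ) :
    ∫ u, h (c + u) * gpdf u = ∫ y, h y * gpdf (y - c) := by
  have := integral_sub_right_eq_self (μ := volume) (fun x => h (c + x) * gpdf x) c
  rw [← this]
  congr 1
  funext y
  rw [show c + (y - c) = y by ring]

lemma gaussQ_eq (t : ℝ) : gaussQ t = ∫ u in Set.Ioi t, gpdf u := by
  simp only [gaussQ, gpdf, one_div]

lemma setIntegral_gpdf_Iic (a : ℝ) :
    ∫ y in Set.Iic (0:ℝ), gpdf (y - a) = gaussQ a := by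
  have h1 : ∫ y in Set.Iic (0:ℝ), gpdf (y - a)
      = ∫ y, (Set.Iic (-a)).indicator gpdf (y - a) := by
    rw [← integral_indicator measurableSet_Iic]
    congr 1
    funext y
    simp only [Set.indicator_apply, Set.mem_Iic]
    have : y ≤ 0 ↔ y - a ≤ -a := by constructor <;> intro <;> linarith
    rw [if_congr this rfl rfl]
  rw [h1, integral_sub_right_eq_self (μ := volume) ((Set.Iic (-a)).indicator gpdf) a,
    integral_indicator measurableSet_Iic]
  have h2 : ∫ y in Set.Iic (-a), gpdf y = ∫ y in Set.Iic (-a), gpdf (-y) := by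
    congr 1; funext y; rw [gpdf_even]
  rw [h2, integral_comp_neg_Iic, neg_neg, gaussQ_eq]

lemma setIntegral_gpdf_Ioi (a : ℝ) :
    ∫ y in Set.Ioi (0:ℝ), gpdf (y + a) = gaussQ a := by
  have h1 : ∫ y in Set.Ioi (0:ℝ), gpdf (y + a)
      = ∫ y, (Set.Ioi a).indicator gpdf (y + a) := by
    rw [← integral_indicator measurableSet_Ioi]
    congr 1
    funext y
    simp only [Set.indicator_apply, Set.mem_Ioi]
    have : 0 < y ↔ a < y + a := by constructor <;> intro <;> linarith
    rw [if_congr this rfl rfl]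
  rw [h1, integral_add_right_eq_self (μ := volume) ((Set.Ioi a).indicator gpdf) a,
    integral_indicator measurableSet_Ioi, gaussQ_eq]

lemma integrable_one_sub_tanh_gpdf (a : ℝ) :
    Integrable (fun y => (1 - Real.tanh (a * y)) * gpdf (y - a)) :=
  integrable_mul_gpdf (g := fun y => 1 - Real.tanh (a * y))
    (measurable_const.sub (measurable_tanh.comp (measurable_const_mul a)))
    (C := 2) (fun y => by
      have h1 := tanh_le_one' (a * y); have h2 := neg_one_le_tanh' (a * y)
      show |1 - Real.tanh (a * y)| ≤ 2
      rw [abs_le]; constructor <;> linarith) a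

/-- The lower bound: `∫ (1 - tanh(ay)) gpdf(y-a) ≥ 2 Q(a)` for `a ≥ 0`. -/
lemma bound_lemma {a : ℝ} (ha : 0 ≤ a) :
    2 * gaussQ a ≤ ∫ y, (1 - Real.tanh (a * y)) * gpdf (y - a) := by
  have hint : Integrable (fun y => (1 - Real.tanh (a * y)) * gpdf (y - a)) :=
    integrable_one_sub_tanh_gpdf a
  have hsplit : (∫ y in Set.Iic (0:ℝ), (1 - Real.tanh (a * y)) * gpdf (y - a))
      + (∫ y in Set.Ioi (0:ℝ), (1 - Real.tanh (a * y)) * gpdf (y - a))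
      = ∫ y, (1 - Real.tanh (a * y)) * gpdf (y - a) :=
    intervalIntegral.integral_Iic_add_Ioi hint.integrableOn hint.integrableOn
  have hA : gaussQ a ≤ ∫ y in Set.Iic (0:ℝ), (1 - Real.tanh (a * y)) * gpdf (y - a) := by
    rw [← setIntegral_gpdf_Iic a]
    refine setIntegral_mono_on (integrable_gpdf.comp_sub_right a).integrableOn
      hint.integrableOn measurableSet_Iic (fun y hy => ?_)
    have h1 : Real.tanh (a * y) ≤ 0 :=
      tanh_nonpos' (mul_nonpos_iff.2 (Or.inl ⟨ha, Set.mem_Iic.1 hy⟩))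
    nlinarith [gpdf_nonneg (y - a)]
  have hB : gaussQ a ≤ ∫ y in Set.Ioi (0:ℝ), (1 - Real.tanh (a * y)) * gpdf (y - a) := by
    rw [← setIntegral_gpdf_Ioi a]
    refine setIntegral_mono_on (integrable_gpdf.comp_add_right a).integrableOn
      hint.integrableOn measurableSet_Ioi (fun y hy => ?_)
    rw [key1 a y]
    have h1 : 0 ≤ Real.tanh (a * y) :=
      tanh_nonneg' (mul_nonneg ha (le_of_lt (Set.mem_Ioi.1 hy)))
    nlinarith [gpdf_nonneg (y + a)]
  linarith

/-- The symmetrization identity. -/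
lemma symm_lemma (a : ℝ) :
    (∫ y, (1 + Real.tanh (a * y)) ^ 2 * gpdf (y + a))
      + (∫ y, (1 - Real.tanh (a * y)) ^ 2 * gpdf (y - a))
      = 2 * ∫ y, (1 - Real.tanh (a * y)) * gpdf (y - a) := by
  have hint1 : Integrable (fun y => (1 + Real.tanh (a * y)) ^ 2 * gpdf (y + a)) :=
    integrable_mul_gpdf' (g := fun y => (1 + Real.tanh (a * y)) ^ 2)
      ((measurable_const.add (measurable_tanh.comp (measurable_const_mul a))).pow_const 2)
      (C := 4) (fun y => by
        have h1 := tanh_le_one' (a * y); have h2 := neg_one_le_tanh' (a * y)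
        show |(1 + Real.tanh (a * y)) ^ 2| ≤ 4
        rw [abs_le]; constructor <;> nlinarith) a
  have hint2 : Integrable (fun y => (1 - Real.tanh (a * y)) ^ 2 * gpdf (y - a)) :=
    integrable_mul_gpdf (g := fun y => (1 - Real.tanh (a * y)) ^ 2)
      ((measurable_const.sub
        (measurable_tanh.comp (measurable_const_mul a))).pow_const 2)
      (C := 4) (fun y => by
        have h1 := tanh_le_one' (a * y); have h2 := neg_one_le_tanh' (a * y)
        show |(1 - Real.tanh (a * y)) ^ 2| ≤ 4
        rw [abs_le]; constructor <;> nlinarith) a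
  rw [← integral_add hint1 hint2, ← integral_const_mul 2]
  congr 1
  funext y
  have h := key1 a y
  nlinarith [h]

/-! ### The clamp function -/

noncomputable def clamp (x : ℝ) : ℝ := max (-1) (min 1 x)

@[simp] lemma clamp_neg_one : clamp (-1) = -1 := by norm_num [clamp]

@[simp] lemma clamp_one : clamp 1 = 1 := by norm_num [clamp]

lemma clamp_eq {x : ℝ} (h : x = -1 ∨ x = 1) : clamp x = x := by
  rcases h with h | h <;> rw [h] <;> simp

lemma abs_clamp_le (x : ℝ) : |clamp x| ≤ 1 := by
  rw [abs_le, clamp]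
  constructor
  · exact le_max_left _ _
  · exact max_le (by norm_num) (min_le_left _ _)

lemma measurable_clamp : Measurable clamp :=
  measurable_const.max (measurable_const.min measurable_id)

/-! ### Measure-theoretic reduction lemmas -/

lemma integral_gaussianReal_eq (g : ℝ → ℝ) :
    ∫ u, g u ∂(gaussianReal 0 1) = ∫ u, g u * gpdf u := by
  rw [gaussianReal_of_var_ne_zero 0 one_ne_zero]
  have hpdf : gaussianPDF 0 1 = fun x => ((gaussianPDFReal 0 1 x).toNNReal : ℝ≥0∞) := by
    funext x; rfl
  rw [hpdf, integral_withDensity_eq_integral_smul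
    ((measurable_gaussianPDFReal 0 1).real_toNNReal) g]
  congr 1
  funext u
  rw [NNReal.smul_def, Real.coe_toNNReal _ (gaussianPDFReal_nonneg 0 1 u),
    gaussianPDFReal_eq_gpdf, smul_eq_mul, mul_comm]

lemma integrable_dirac'' {g : ℝ → ℝ} (hg : StronglyMeasurable g) (x : ℝ) :
    Integrable g (Measure.dirac x) := by
  refine ⟨hg.aestronglyMeasurable, ?_⟩
  rw [HasFiniteIntegral, lintegral_dirac]
  exact ENNReal.coe_lt_top

lemma integral_two_point {g : ℝ → ℝ} (hg : StronglyMeasurable g) :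
    ∫ x, g x ∂((2 : ENNReal)⁻¹ • Measure.dirac (-1 : ℝ)
        + (2 : ENNReal)⁻¹ • Measure.dirac (1 : ℝ))
      = 2⁻¹ * g (-1) + 2⁻¹ * g 1 := by
  have h1 : Integrable g ((2 : ENNReal)⁻¹ • Measure.dirac (-1 : ℝ)) :=
    (integrable_smul_measure (by simp) (by simp)).2 (integrable_dirac'' hg _)
  have h2 : Integrable g ((2 : ENNReal)⁻¹ • Measure.dirac (1 : ℝ)) :=
    (integrable_smul_measure (by simp) (by simp)).2 (integrable_dirac'' hg _)
  rw [integral_add_measure h1 h2, integral_smul_measure, integral_smul_measure,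
    integral_dirac' _ _ hg, integral_dirac' _ _ hg]
  norm_num

section Prob

variable {Ω : Type*} [MeasureSpace Ω] [IsProbabilityMeasure (volume : Measure Ω)]
    (b n : Ω → ℝ)

lemma key_int (hb : Measurable b) (hn : Measurable n)
    (hbLaw : Measure.map b volume =
      (2 : ENNReal)⁻¹ • Measure.dirac (-1 : ℝ) + (2 : ENNReal)⁻¹ • Measure.dirac (1 : ℝ))
    (hnLaw : Measure.map n volume = gaussianReal 0 1)
    (hindep : IndepFun b n volume)
    (f : ℝ → ℝ → ℝ) (hf : Measurable (Function.uncurry f)) (C : ℝ)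
    (hC : ∀ x u, |f x u| ≤ C) :
    ∫ ω, f (b ω) (n ω)
      = 2⁻¹ * (∫ u, f (-1) u * gpdf u) + 2⁻¹ * (∫ u, f 1 u * gpdf u) := by
  have hpair : AEMeasurable (fun ω => (b ω, n ω)) volume := (hb.prodMk hn).aemeasurable
  have hmap : Measure.map (fun ω => (b ω, n ω)) volume
      = (((2 : ENNReal)⁻¹ • Measure.dirac (-1 : ℝ)
        + (2 : ENNReal)⁻¹ • Measure.dirac (1 : ℝ)).prod (gaussianReal 0 1)) := by
    rw [← hbLaw, ← hnLaw]
    exact (indepFun_iff_map_prod_eq_prod_map_map hb.aemeasurable hn.aemeasurable).mp hindep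
  haveI : IsProbabilityMeasure ((2 : ENNReal)⁻¹ • Measure.dirac (-1 : ℝ)
      + (2 : ENNReal)⁻¹ • Measure.dirac (1 : ℝ)) := by
    have h : IsProbabilityMeasure (Measure.map b volume) :=
      Measure.isProbabilityMeasure_map hb.aemeasurable
    rwa [hbLaw] at h
  have h1 : ∫ ω, f (b ω) (n ω)
      = ∫ p, Function.uncurry f p ∂(Measure.map (fun ω => (b ω, n ω)) volume) :=
    (integral_map hpair hf.aestronglyMeasurable).symm
  have hint : Integrable (Function.uncurry f)
      ((((2 : ENNReal)⁻¹ • Measure.dirac (-1 : ℝ)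
        + (2 : ENNReal)⁻¹ • Measure.dirac (1 : ℝ)).prod (gaussianReal 0 1))) := by
    refine (integrable_const C).mono' hf.aestronglyMeasurable (ae_of_all _ fun p => ?_)
    rw [Real.norm_eq_abs]
    exact hC p.1 p.2
  rw [h1, hmap, integral_prod _ hint]
  have hout : StronglyMeasurable fun x => ∫ y, Function.uncurry f (x, y) ∂(gaussianReal 0 1) :=
    hf.stronglyMeasurable.integral_prod_right'
  rw [integral_two_point hout]
  simp only [Function.uncurry_apply_pair]
  rw [integral_gaussianReal_eq, integral_gaussianReal_eq]

lemma key_int2 (hb : Measurable b) (hn : Measurable n)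
    (hbLaw : Measure.map b volume =
      (2 : ENNReal)⁻¹ • Measure.dirac (-1 : ℝ) + (2 : ENNReal)⁻¹ • Measure.dirac (1 : ℝ))
    (hnLaw : Measure.map n volume = gaussianReal 0 1)
    (hindep : IndepFun b n volume) (a : ℝ)
    (F : ℝ → ℝ → ℝ) (hF : Measurable (Function.uncurry F)) (C : ℝ)
    (hC : ∀ x y, |F x y| ≤ C) :
    ∫ ω, F (b ω) (a * b ω + n ω)
      = 2⁻¹ * (∫ y, F (-1) y * gpdf (y + a)) + 2⁻¹ * (∫ y, F 1 y * gpdf (y - a)) := by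
  have hmeas : Measurable (Function.uncurry fun x u => F x (a * x + u)) :=
    hF.comp (measurable_fst.prodMk
      ((measurable_const.mul measurable_fst).add measurable_snd))
  have h := key_int b n hb hn hbLaw hnLaw hindep (fun x u => F x (a * x + u))
    hmeas C (fun x u => hC x _)
  calc ∫ ω, F (b ω) (a * b ω + n ω)
      = 2⁻¹ * (∫ u, F (-1) (a * (-1) + u) * gpdf u)
        + 2⁻¹ * (∫ u, F 1 (a * 1 + u) * gpdf u) := h
    _ = 2⁻¹ * (∫ y, F (-1) y * gpdf (y + a)) + 2⁻¹ * (∫ y, F 1 y * gpdf (y - a)) := by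
        congr 1
        · congr 1
          calc ∫ u, F (-1) (a * (-1) + u) * gpdf u
              = ∫ u, F (-1) (-a + u) * gpdf u := by
                congr 1; funext u; rw [show a * (-1) + u = -a + u by ring]
            _ = ∫ y, F (-1) y * gpdf (y - -a) := integral_shift _ _
            _ = ∫ y, F (-1) y * gpdf (y + a) := by
                congr 1; funext y; rw [sub_neg_eq_add]
        · congr 1
          calc ∫ u, F 1 (a * 1 + u) * gpdf u
              = ∫ u, F 1 (a + u) * gpdf u := by
                congr 1; funext u; rw [mul_one]
            _ = ∫ y, F 1 y * gpdf (y - a) := integral_shift _ _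

end Prob

theorem mmse_binary_formula_and_bound {Ω : Type*} [MeasureSpace Ω]
    [IsProbabilityMeasure (volume : Measure Ω)]
    (b n : Ω → ℝ) (hb : Measurable b) (hn : Measurable n)
    (hbLaw : Measure.map b volume =
      (2 : ENNReal)⁻¹ • Measure.dirac (-1 : ℝ) + (2 : ENNReal)⁻¹ • Measure.dirac (1 : ℝ))
    (hnLaw : Measure.map n volume = gaussianReal 0 1)
    (hindep : IndepFun b n volume) (γ : ℝ) (hγ : 0 ≤ γ) :
    mmse b n γ =
      (1 / Real.sqrt (2 * π)) * ∫ y : ℝ,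
        (1 - Real.tanh (Real.sqrt γ * y)) * Real.exp (-(y - Real.sqrt γ) ^ 2 / 2) ∧
    mmse b n γ ≥ 2 * gaussQ (Real.sqrt γ) := by
  set a : ℝ := Real.sqrt γ with haa
  have ha : 0 ≤ a := Real.sqrt_nonneg γ
  set Y : Ω → ℝ := fun ω' => Real.sqrt γ * b ω' + n ω' with hYdef
  have hY : Measurable Y := (measurable_const.mul hb).add hn
  have hm : MeasurableSpace.comap Y Real.measurableSpace
      ≤ (MeasureSpace.toMeasurableSpace : MeasurableSpace Ω) := hY.comap_le
  -- b is a.e. ±1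
  have hbs : MeasurableSet ({-1, 1} : Set ℝ) :=
    (measurableSet_singleton 1).insert (-1)
  have h0 : volume (b ⁻¹' ({-1, 1} : Set ℝ)ᶜ) = 0 := by
    rw [← Measure.map_apply hb hbs.compl, hbLaw]
    simp [Measure.dirac_apply' _ hbs.compl]
  have hb_ae : ∀ᵐ ω, b ω = -1 ∨ b ω = 1 := by
    have h : ∀ᵐ ω, b ω ∈ ({-1, 1} : Set ℝ) := by
      rw [ae_iff]
      convert h0 using 2
      rfl
    exact h.mono fun ω hω => by simpa using hω
  -- the conditional expectation candidate
  set g : Ω → ℝ := fun ω => Real.tanh (a * Y ω) with hgdef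
  have hgmeas : Measurable g :=
    measurable_tanh.comp ((measurable_const_mul a).comp hY)
  have hbint : Integrable b volume := by
    refine (integrable_const (1 : ℝ)).mono' hb.aestronglyMeasurable
      (hb_ae.mono fun ω h => ?_)
    rcases h with h | h <;> simp [h]
  have hgint : Integrable g volume := by
    refine (integrable_const (1 : ℝ)).mono' hgmeas.aestronglyMeasurable
      (ae_of_all _ fun ω => ?_)
    simpa [Real.norm_eq_abs] using abs_tanh_le_one (a * Y ω)
  -- the set-integral equality
  have hg_eq : ∀ s : Set Ω, MeasurableSet[MeasurableSpace.comap Y Real.measurableSpace] s →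
      volume s < ⊤ → ∫ ω in s, g ω = ∫ ω in s, b ω := by
    intro s hs _
    obtain ⟨t, ht, rfl⟩ := hs
    set k : ℝ → ℝ := Set.indicator t (fun _ => (1 : ℝ)) with hkdef
    have hk : Measurable k := measurable_const.indicator ht
    have hkb : ∀ y, |k y| ≤ 1 := by
      intro y
      rw [hkdef]
      by_cases hyt : y ∈ t <;> simp [Set.indicator_apply, hyt]
    -- LHS : integral of g over the preimage
    have eL : ∫ ω in Y ⁻¹' t, g ω
        = ∫ ω, (fun (x y : ℝ) => k y * Real.tanh (a * y)) (b ω) (a * b ω + n ω) := by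
      rw [← integral_indicator (hY ht)]
      congr 1
      funext ω
      show (Y ⁻¹' t).indicator g ω = k (Y ω) * Real.tanh (a * Y ω)
      by_cases hmem : ω ∈ Y ⁻¹' t
      · rw [Set.indicator_of_mem hmem, hkdef,
          Set.indicator_of_mem (show Y ω ∈ t from hmem), one_mul]
      · rw [Set.indicator_of_notMem hmem, hkdef,
          Set.indicator_of_notMem (show Y ω ∉ t from hmem), zero_mul]
    have eR : ∫ ω in Y ⁻¹' t, b ω
        = ∫ ω, (fun (x y : ℝ) => k y * clamp x) (b ω) (a * b ω + n ω) := by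
      rw [← integral_indicator (hY ht)]
      refine integral_congr_ae (hb_ae.mono fun ω hω => ?_)
      show (Y ⁻¹' t).indicator b ω = k (Y ω) * clamp (b ω)
      by_cases hmem : ω ∈ Y ⁻¹' t
      · rw [Set.indicator_of_mem hmem, hkdef,
          Set.indicator_of_mem (show Y ω ∈ t from hmem), one_mul, clamp_eq hω]
      · rw [Set.indicator_of_notMem hmem, hkdef,
          Set.indicator_of_notMem (show Y ω ∉ t from hmem), zero_mul]
    rw [eL, eR]
    rw [key_int2 b n hb hn hbLaw hnLaw hindep a (fun (x y : ℝ) => k y * Real.tanh (a * y))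
      (by exact (hk.comp measurable_snd).mul ((measurable_tanh.comp
        (measurable_const_mul a)).comp measurable_snd)) 1
      (fun x y => by
        show |k y * Real.tanh (a * y)| ≤ 1
        rw [abs_mul]
        exact mul_le_one₀ (hkb y) (abs_nonneg _) (abs_tanh_le_one _)),
      key_int2 b n hb hn hbLaw hnLaw hindep a (fun (x y : ℝ) => k y * clamp x)
      (by exact (hk.comp measurable_snd).mul (measurable_clamp.comp measurable_fst)) 1
      (fun x y => by
        show |k y * clamp x| ≤ 1
        rw [abs_mul]
        exact mul_le_one₀ (hkb y) (abs_nonneg _) (abs_clamp_le _))]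
    simp only [clamp_neg_one, clamp_one]
    -- now a pure real-analysis identity
    have i1 : Integrable (fun y => k y * gpdf (y + a)) := integrable_mul_gpdf' hk hkb a
    have i2 : Integrable (fun y => k y * gpdf (y - a)) := integrable_mul_gpdf hk hkb a
    have hkt : Measurable (fun y => k y * Real.tanh (a * y)) :=
      hk.mul (measurable_tanh.comp (measurable_const_mul a))
    have hktb : ∀ y, |k y * Real.tanh (a * y)| ≤ 1 := fun y => by
      rw [abs_mul]
      exact mul_le_one₀ (hkb y) (abs_nonneg _) (abs_tanh_le_one _)
    have i3 : Integrable (fun y => (k y * Real.tanh (a * y)) * gpdf (y + a)) :=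
      integrable_mul_gpdf' hkt hktb a
    have i4 : Integrable (fun y => (k y * Real.tanh (a * y)) * gpdf (y - a)) :=
      integrable_mul_gpdf hkt hktb a
    have hptwise : ∫ y, (k y * gpdf (y - a) - k y * gpdf (y + a))
        = ∫ y, ((k y * Real.tanh (a * y)) * gpdf (y + a)
            + (k y * Real.tanh (a * y)) * gpdf (y - a)) := by
      congr 1
      funext y
      have h2 := key2 a y
      calc k y * gpdf (y - a) - k y * gpdf (y + a)
          = k y * (gpdf (y - a) - gpdf (y + a)) := by ring
        _ = k y * (Real.tanh (a * y) * (gpdf (y - a) + gpdf (y + a))) := by rw [h2]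
        _ = (k y * Real.tanh (a * y)) * gpdf (y + a)
            + (k y * Real.tanh (a * y)) * gpdf (y - a) := by ring
    rw [integral_sub i2 i1, integral_add i3 i4] at hptwise
    have e5 : ∫ y, k y * (-1) * gpdf (y + a) = -∫ y, k y * gpdf (y + a) := by
      rw [← integral_neg]
      congr 1
      funext y
      ring
    have e6 : ∫ y, k y * 1 * gpdf (y - a) = ∫ y, k y * gpdf (y - a) := by
      congr 1
      funext y
      ring
    rw [e5, e6]
    linarith
  -- strong measurability of g w.r.t. the comap σ-algebra
  have hgsm : AEStronglyMeasurable[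
      MeasurableSpace.comap Y Real.measurableSpace] g volume := by
    refine MeasureTheory.StronglyMeasurable.aestronglyMeasurable ?_
    have hYm : Measurable[MeasurableSpace.comap Y Real.measurableSpace] Y :=
      comap_measurable Y
    exact Measurable.stronglyMeasurable
      ((measurable_tanh.comp (measurable_const_mul a)).comp hYm)
  have hce : g =ᵐ[volume] (volume[b | MeasurableSpace.comap Y Real.measurableSpace]) :=
    ae_eq_condExp_of_forall_setIntegral_eq hm hbint
      (fun s _ _ => hgint.integrableOn) hg_eq hgsm
  -- compute the mmse
  have hmmse : mmse b n γ = ∫ y, (1 - Real.tanh (a * y)) * gpdf (y - a) := by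
    have e1 : mmse b n γ = ∫ ω, (b ω - g ω) ^ 2 := by
      show (∫ ω, (b ω - (volume[b | MeasurableSpace.comap Y Real.measurableSpace]) ω) ^ 2)
        = ∫ ω, (b ω - g ω) ^ 2
      refine integral_congr_ae (hce.mono fun ω hω => ?_)
      show (b ω - (volume[b | MeasurableSpace.comap Y Real.measurableSpace]) ω) ^ 2
        = (b ω - g ω) ^ 2
      rw [← hω]
    have e2 : ∫ ω, (b ω - g ω) ^ 2
        = ∫ ω, (fun (x y : ℝ) => (clamp x - Real.tanh (a * y)) ^ 2) (b ω) (a * b ω + n ω) := by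
      refine integral_congr_ae (hb_ae.mono fun ω hω => ?_)
      show (b ω - g ω) ^ 2 = (clamp (b ω) - Real.tanh (a * Y ω)) ^ 2
      rw [clamp_eq hω]
    rw [e1, e2, key_int2 b n hb hn hbLaw hnLaw hindep a
      (fun (x y : ℝ) => (clamp x - Real.tanh (a * y)) ^ 2)
      (by exact ((measurable_clamp.comp measurable_fst).sub
        ((measurable_tanh.comp (measurable_const_mul a)).comp measurable_snd)).pow_const 2) 4
      (fun x y => by
        show |(clamp x - Real.tanh (a * y)) ^ 2| ≤ 4
        have h1 := abs_clamp_le x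
        have h2 := abs_tanh_le_one (a * y)
        rw [abs_le] at h1 h2 ⊢
        constructor <;> nlinarith)]
    simp only [clamp_neg_one, clamp_one]
    have e3 : ∫ y, (-1 - Real.tanh (a * y)) ^ 2 * gpdf (y + a)
        = ∫ y, (1 + Real.tanh (a * y)) ^ 2 * gpdf (y + a) := by
      congr 1
      funext y
      ring
    rw [e3]
    have := symm_lemma a
    linarith
  constructor
  · rw [hmmse, ← integral_const_mul]
    congr 1
    funext y
    rw [gpdf, one_div]
    ring
  · rw [ge_iff_le, hmmse]
    exact bound_lemma ha
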